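/- With constant kernel k ≡ 1, the exact DG matrix is M: that is, for 0 ≤ i, j ≤ m−1, ∫_0^1 (∫_0^s P_j(τ) dτ) P_i(s) ds equals 1/2 if i = j = 0, −α_j if i = j−1 (j ≥ 1), α_i if j = i−1 (i ≥ 1), and 0 otherwise, where α_j = 1/(8j²−2). -/

import Mathlib

open Polynomial

/-- The shifted Legendre polynomial of degree n on [0,1], via the Rodrigues formula
    P_n(s) = (1/n!) dⁿ/dsⁿ (s² − s)ⁿ. -/
noncomputable def shiftedLegendre (n : ℕ) : Polynomial ℝ :=
  (1 / (n.factorial : ℝ)) • (derivative^[n] ((X ^ 2 - X) ^ n))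

/-- α_j = 1/(8j²−2). -/
noncomputable def alph (j : ℕ) : ℝ := 1 / (8 * (j : ℝ) ^ 2 - 2)

namespace DGaux

noncomputable def Q (n : ℕ) : Polynomial ℝ := (X ^ 2 - X) ^ n

noncomputable def A (j : ℕ) : Polynomial ℝ := if j = 0 then X else derivative^[j - 1] (Q j)

lemma ii (p q : Polynomial ℝ) (a b : ℝ) :
    IntervalIntegrable (fun x => p.eval x * q.eval x) MeasureTheory.volume a b :=
  (p.continuous.mul q.continuous).intervalIntegrable a b

lemma eval_iter_deriv_Q {k n : ℕ} (h : k < n) {x : ℝ} (hx : x ^ 2 - x = 0) :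
    (derivative^[k] (Q n)).eval x = 0 := by
  obtain ⟨r, hr⟩ := pow_sub_dvd_iterate_derivative_pow (X ^ 2 - X : Polynomial ℝ) n k
  rw [Q, hr, eval_mul, eval_pow]
  have hx' : (X ^ 2 - X : Polynomial ℝ).eval x = 0 := by simpa using hx
  rw [hx', zero_pow (by omega), zero_mul]

lemma ibp (p q : Polynomial ℝ)
    (h : p.eval 1 * q.eval 1 = p.eval 0 * q.eval 0) :
    (∫ x in (0:ℝ)..1, p.eval x * (derivative q).eval x)
      = - ∫ x in (0:ℝ)..1, (derivative p).eval x * q.eval x := by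
  have H := intervalIntegral.integral_mul_deriv_eq_deriv_mul
    (u := fun x => p.eval x) (v := fun x => q.eval x)
    (u' := fun x => (derivative p).eval x) (v' := fun x => (derivative q).eval x)
    (fun x _ => p.hasDerivAt x) (fun x _ => q.hasDerivAt x)
    ((derivative p).continuous.intervalIntegrable 0 1)
    ((derivative q).continuous.intervalIntegrable 0 1)
  rw [H, h]; ring

lemma ibp_iter (n : ℕ) : ∀ b, b ≤ n → ∀ p : Polynomial ℝ,
    (∫ x in (0:ℝ)..1, p.eval x * (derivative^[b] (Q n)).eval x)
      = (-1:ℝ)^b * ∫ x in (0:ℝ)..1, (derivative^[b] p).eval x * (Q n).eval x := by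
  intro b
  induction b with
  | zero => intro _ p; simp
  | succ b ih =>
    intro hb p
    have h0 : (derivative^[b] (Q n)).eval (0:ℝ) = 0 :=
      eval_iter_deriv_Q (by omega) (by ring)
    have h1 : (derivative^[b] (Q n)).eval (1:ℝ) = 0 :=
      eval_iter_deriv_Q (by omega) (by ring)
    rw [Function.iterate_succ_apply']
    rw [ibp p _ (by rw [h0, h1]; ring)]
    rw [ih (by omega) (derivative p)]
    rw [← Function.iterate_succ_apply]
    ring

lemma iter_add (k : ℕ) (p q : Polynomial ℝ) :
    derivative^[k] (p + q) = derivative^[k] p + derivative^[k] q := by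
  induction k generalizing p q with
  | zero => simp
  | succ k ih => simp [Function.iterate_succ_apply, derivative_add, ih]

lemma monic_XsqX : (X ^ 2 - X : Polynomial ℝ).Monic := by
  apply monic_X_pow_sub
  simpa using (degree_X_le (R := ℝ)).trans_lt (by norm_num)

lemma natDegree_Q (n : ℕ) : (Q n).natDegree = 2 * n := by
  rw [Q, natDegree_pow]
  have h2 : (X ^ 2 - X : Polynomial ℝ).natDegree = 2 := by compute_degree!
  rw [h2, Nat.mul_comm]

lemma monic_Q (n : ℕ) : (Q n).Monic := monic_XsqX.pow n

lemma iter_deriv_Q_top (n : ℕ) :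
    derivative^[2 * n] (Q n) = C ((2 * n).factorial : ℝ) := by
  rcases Nat.eq_zero_or_pos n with h | h
  · subst h; simp [Q]
  · have hm := monic_Q n
    have hd := natDegree_Q n
    have key : Q n = (Q n).eraseLead + X ^ (2 * n) := by
      conv_lhs => rw [← Polynomial.eraseLead_add_C_mul_X_pow (Q n)]
      rw [hd, hm.leadingCoeff, C_1, one_mul]
    rw [key, iter_add]
    have hz : derivative^[2 * n] ((Q n).eraseLead) = 0 := by
      rcases (Q n).eraseLead_natDegree_lt_or_eraseLead_eq_zero with hlt | he
      · exact iterate_derivative_eq_zero (by omega)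
      · rw [he, iterate_derivative_zero]
    rw [hz, zero_add, iterate_derivative_X_pow_eq_smul, Nat.descFactorial_self]
    simp [Polynomial.smul_eq_C_mul, Polynomial.C_eq_natCast]

lemma eval_Q (n : ℕ) (x : ℝ) : (Q n).eval x = x ^ n * (x - 1) ^ n := by
  rw [Q, eval_pow, show (X ^ 2 - X : Polynomial ℝ).eval x = x * (x - 1) by
    simp; ring, mul_pow]

lemma beta : ∀ b a : ℕ, (∫ x in (0:ℝ)..1, x ^ a * (x - 1) ^ b)
    = (-1 : ℝ)^b * ((a.factorial : ℝ) * (b.factorial : ℝ)) / ((a + b + 1).factorial : ℝ) := by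
  intro b
  induction b with
  | zero =>
    intro a
    have h : (∫ x in (0:ℝ)..1, x ^ a * (x - 1) ^ 0) = ∫ x in (0:ℝ)..1, x ^ a := by
      simp
    rw [h, integral_pow, show a + 0 + 1 = a + 1 from rfl, Nat.factorial_succ]
    have ha : ((a:ℝ) + 1) ≠ 0 := by positivity
    have hf : ((a.factorial : ℝ)) ≠ 0 := by
      exact_mod_cast a.factorial_ne_zero
    push_cast
    field_simp
    try ring
  | succ b ih =>
    intro a
    have ha : ((a:ℝ) + 1) ≠ 0 := by positivity
    set q : Polynomial ℝ := C (1/((a:ℝ)+1)) * X ^ (a+1) with hq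
    have hdq : derivative q = X ^ a := by
      rw [hq, derivative_C_mul, derivative_X_pow]
      rw [← mul_assoc, ← C_mul]
      push_cast
      rw [one_div_mul_cancel ha, C_1, one_mul]
    have hbd : ((X - C 1 : Polynomial ℝ) ^ (b+1)).eval 1 * q.eval 1
        = ((X - C 1 : Polynomial ℝ) ^ (b+1)).eval 0 * q.eval 0 := by
      simp [hq]
    have H := ibp ((X - C 1 : Polynomial ℝ) ^ (b+1)) q hbd
    rw [hdq] at H
    have hL : (∫ x in (0:ℝ)..1, ((X - C 1 : Polynomial ℝ) ^ (b+1)).eval x * (X ^ a : Polynomial ℝ).eval x)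
        = ∫ x in (0:ℝ)..1, x ^ a * (x - 1) ^ (b+1) := by
      apply intervalIntegral.integral_congr
      intro x _
      simp [mul_comm]
    have hR : (∫ x in (0:ℝ)..1, (derivative ((X - C 1 : Polynomial ℝ) ^ (b+1))).eval x * q.eval x)
        = ((b:ℝ)+1) / ((a:ℝ)+1) * ∫ x in (0:ℝ)..1, x ^ (a+1) * (x - 1) ^ b := by
      rw [← intervalIntegral.integral_const_mul]
      apply intervalIntegral.integral_congr
      intro x _
      rw [derivative_pow]
      simp [hq]
      ring
    rw [hL, hR] at H
    rw [H, ih (a+1)]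
    have hfa : ((a.factorial : ℝ)) ≠ 0 := by exact_mod_cast a.factorial_ne_zero
    have hfb : ((b.factorial : ℝ)) ≠ 0 := by exact_mod_cast b.factorial_ne_zero
    have hfab : (((a + 1 + b + 1).factorial : ℝ)) ≠ 0 := by
      exact_mod_cast (a + 1 + b + 1).factorial_ne_zero
    rw [show a + (b + 1) + 1 = a + 1 + b + 1 by omega]
    rw [show (a+1).factorial = (a+1) * a.factorial from Nat.factorial_succ a]
    rw [show (b+1).factorial = (b+1) * b.factorial from Nat.factorial_succ b]
    push_cast
    field_simp
    ring

lemma eval_sL (n : ℕ) (x : ℝ) :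
    (_root_.shiftedLegendre n).eval x = (1 / (n.factorial : ℝ)) * (derivative^[n] (Q n)).eval x := by
  simp [_root_.shiftedLegendre, Q, smul_eq_mul]

lemma inner (j : ℕ) (s : ℝ) :
    (∫ τ in (0:ℝ)..s, (_root_.shiftedLegendre j).eval τ)
      = (1 / (j.factorial : ℝ)) * (A j).eval s := by
  simp only [eval_sL]
  rw [intervalIntegral.integral_const_mul]
  congr 1
  rcases Nat.eq_zero_or_pos j with h | h
  · subst h
    simp [A, Q]
  · have hj : j - 1 + 1 = j := by omega
    have key : ∀ τ ∈ Set.uIcc (0:ℝ) s, HasDerivAt (fun y => (derivative^[j-1] (Q j)).eval y)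
        ((derivative^[j] (Q j)).eval τ) τ := by
      intro τ _
      rw [← hj, Function.iterate_succ_apply']
      exact (derivative^[(j-1+1)-1] (Q (j-1+1))).hasDerivAt τ
    rw [intervalIntegral.integral_eq_sub_of_hasDerivAt key
      ((derivative^[j] (Q j)).continuous.intervalIntegrable 0 s)]
    rw [eval_iter_deriv_Q (k := j - 1) (n := j) (by omega) (x := 0) (by norm_num), sub_zero]
    simp only [A]
    rw [if_neg (by omega)]


lemma comm01 (p q : Polynomial ℝ) :
    (∫ x in (0:ℝ)..1, p.eval x * q.eval x) = ∫ x in (0:ℝ)..1, q.eval x * p.eval x := by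
  apply intervalIntegral.integral_congr
  intro x _
  exact mul_comm _ _

lemma crossT (m : ℕ) (p : Polynomial ℝ) (hp : derivative^[m+1] p = C (((2*m).factorial : ℝ))) :
    (∫ x in (0:ℝ)..1, p.eval x * (derivative^[m+1] (Q (m+1))).eval x)
      = (((2*m).factorial : ℝ) * (((m+1).factorial : ℝ) * ((m+1).factorial : ℝ)))
          / ((2*m+3).factorial : ℝ) := by
  rw [ibp_iter (m+1) (m+1) le_rfl p, hp]
  have h1 : ∀ x : ℝ, (C (((2*m).factorial:ℝ))).eval x * (Q (m+1)).eval x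
      = ((2*m).factorial:ℝ) * (x^(m+1) * (x-1)^(m+1)) := by
    intro x; rw [eval_C, eval_Q]
  simp only [h1]
  rw [intervalIntegral.integral_const_mul, beta (m+1) (m+1),
      show (m+1)+(m+1)+1 = 2*m+3 by ring]
  have hsg : ((-1:ℝ)^(m+1)) * ((-1:ℝ)^(m+1)) = 1 := by
    rw [← pow_add]; exact Even.neg_one_pow ⟨m+1, by ring⟩
  linear_combination (((2*m).factorial:ℝ) * ((((m+1).factorial:ℝ) * ((m+1).factorial:ℝ))
    / ((2*m+3).factorial:ℝ))) * hsg

lemma crossT' (m : ℕ) :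
    (∫ x in (0:ℝ)..1, (derivative^[m] (Q (m+1))).eval x * (derivative^[m] (Q m)).eval x)
      = -((((2*m).factorial : ℝ) * (((m+1).factorial : ℝ) * ((m+1).factorial : ℝ)))
          / ((2*m+3).factorial : ℝ)) := by
  rw [comm01]
  rw [ibp_iter (m+1) m (by omega) (derivative^[m] (Q m))]
  rw [← Function.iterate_add_apply, show m + m = 2*m by ring, iter_deriv_Q_top]
  have h1 : ∀ x : ℝ, (C (((2*m).factorial:ℝ))).eval x * (Q (m+1)).eval x
      = ((2*m).factorial:ℝ) * (x^(m+1) * (x-1)^(m+1)) := by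
    intro x; rw [eval_C, eval_Q]
  simp only [h1]
  rw [intervalIntegral.integral_const_mul, beta (m+1) (m+1),
      show (m+1)+(m+1)+1 = 2*m+3 by ring]
  have hsg : ((-1:ℝ)^m) * ((-1:ℝ)^(m+1)) = -1 := by
    rw [← pow_add]; exact Odd.neg_one_pow ⟨m, by ring⟩
  linear_combination (((2*m).factorial:ℝ) * ((((m+1).factorial:ℝ) * ((m+1).factorial:ℝ))
    / ((2*m+3).factorial:ℝ))) * hsg

lemma final_arith (m : ℕ) :
    1/((m.factorial:ℝ) * ((m+1).factorial:ℝ))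
      * ((((2*m).factorial : ℝ) * (((m+1).factorial : ℝ) * ((m+1).factorial : ℝ)))
          / ((2*m+3).factorial : ℝ))
      = 1/(8*((m:ℝ)+1)^2 - 2) := by
  have e1 : ((m+1).factorial:ℝ) = ((m:ℝ)+1) * (m.factorial:ℝ) := by
    rw [Nat.factorial_succ]; push_cast; ring
  have e3 : ((2*m+3).factorial:ℝ)
      = ((2*(m:ℝ)+3) * (2*(m:ℝ)+2) * (2*(m:ℝ)+1)) * ((2*m).factorial:ℝ) := by
    rw [show 2*m+3 = (2*m+2)+1 by omega, Nat.factorial_succ,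
        show 2*m+2 = (2*m+1)+1 by omega, Nat.factorial_succ,
        show 2*m+1 = (2*m)+1 by omega, Nat.factorial_succ]
    push_cast; ring
  have hm0 : (m.factorial:ℝ) ≠ 0 := by exact_mod_cast m.factorial_ne_zero
  have hm2 : ((2*m).factorial:ℝ) ≠ 0 := by exact_mod_cast (2*m).factorial_ne_zero
  have hc : (0:ℝ) ≤ (m:ℝ) := Nat.cast_nonneg m
  have h8 : (8*((m:ℝ)+1)^2 - 2) ≠ 0 := by nlinarith
  have h1 : ((m:ℝ)+1) ≠ 0 := by positivity
  have h3 : (2*(m:ℝ)+3) ≠ 0 := by positivity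
  have h4 : (2*(m:ℝ)+2) ≠ 0 := by positivity
  have h5 : (2*(m:ℝ)+1) ≠ 0 := by positivity
  rw [e1, e3]
  rw [eq_div_iff h8]
  field_simp
  ring

lemma alph_succ (m : ℕ) : alph (m+1) = 1/(8*((m:ℝ)+1)^2 - 2) := by
  simp only [alph]
  push_cast
  ring_nf

end DGaux

open DGaux in
/-- with constant kernel k ≡ 1, the DG matrix entries
    ∫₀¹ (∫₀ˢ P_j) P_i ds form exactly the tridiagonal matrix M. -/
theorem dg_matrix_constant_kernel (i j : ℕ) :
    (∫ s in (0:ℝ)..1, (∫ τ in (0:ℝ)..s, (_root_.shiftedLegendre j).eval τ) * (_root_.shiftedLegendre i).eval s)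
      = if i = 0 ∧ j = 0 then 1/2
        else if i + 1 = j then - alph j
        else if j + 1 = i then alph i
        else 0 := by
  have hfi : ((i.factorial : ℝ)) ≠ 0 := by exact_mod_cast i.factorial_ne_zero
  have hfj : ((j.factorial : ℝ)) ≠ 0 := by exact_mod_cast j.factorial_ne_zero
  have hmul : ∀ x : ℝ,
      (1 / (j.factorial : ℝ) * (A j).eval x) * (1 / (i.factorial : ℝ) * (derivative^[i] (Q i)).eval x)
      = (1 / ((j.factorial : ℝ) * (i.factorial : ℝ)))
          * ((A j).eval x * (derivative^[i] (Q i)).eval x) := by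
    intro x; ring
  simp only [DGaux.inner]
  simp only [eval_sL]
  simp only [hmul]
  rw [intervalIntegral.integral_const_mul]
  by_cases h00 : i = 0 ∧ j = 0
  · obtain ⟨rfl, rfl⟩ := h00
    rw [if_pos ⟨rfl, rfl⟩]
    have h1 : ∀ x : ℝ, (A 0).eval x * (derivative^[0] (Q 0)).eval x = x := by
      intro x; simp [A, Q]
    simp only [h1]
    rw [integral_id]
    norm_num
  rw [if_neg h00]
  by_cases h1 : i + 1 = j
  · -- j = i + 1 : value -alph j
    rw [if_pos h1]
    obtain rfl : j = i + 1 := h1.symm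
    have hA : A (i+1) = derivative^[i] (Q (i+1)) := by
      simp [A]
    rw [hA, crossT' i, show ((i+1).factorial : ℝ) * ((i.factorial : ℝ)) =
      (i.factorial : ℝ) * ((i+1).factorial : ℝ) from mul_comm _ _]
    rw [alph_succ i]
    have := final_arith i
    linarith [this]
  rw [if_neg h1]
  by_cases h2 : j + 1 = i
  · -- i = j + 1 : value alph i
    rw [if_pos h2]
    obtain rfl : i = j + 1 := h2.symm
    have hp : derivative^[j+1] (A j) = C (((2*j).factorial : ℝ)) := by
      rcases Nat.eq_zero_or_pos j with h | h
      · subst h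
        simp [A]
      · obtain ⟨k, rfl⟩ : ∃ k, j = k + 1 := ⟨j - 1, by omega⟩
        have hA : A (k+1) = derivative^[k] (Q (k+1)) := by simp [A]
        rw [hA, ← Function.iterate_add_apply, show k+1+1+k = 2*(k+1) by ring,
          iter_deriv_Q_top]
    rw [crossT j (A j) hp, alph_succ j]
    exact final_arith j
  rw [if_neg h2]
  by_cases hij : i = j
  · -- i = j ≥ 1 : value 0
    obtain ⟨k, rfl⟩ : ∃ k, i = k + 1 := ⟨i - 1, by omega⟩
    obtain rfl : j = k + 1 := hij.symm
    have hA : A (k+1) = derivative^[k] (Q (k+1)) := by simp [A]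
    have hQd : derivative^[k+1] (Q (k+1)) = derivative (derivative^[k] (Q (k+1))) :=
      Function.iterate_succ_apply' _ _ _
    set p : Polynomial ℝ := derivative^[k] (Q (k+1)) with hpdef
    have key : ∀ x ∈ Set.uIcc (0:ℝ) 1, HasDerivAt (fun y => p.eval y * p.eval y / 2)
        (p.eval x * (derivative p).eval x) x := by
      intro x _
      have h2 : HasDerivAt (fun y => p.eval y * p.eval y / 2)
          (((derivative p).eval x * p.eval x + p.eval x * (derivative p).eval x) / 2) x :=
        ((p.hasDerivAt x).mul (p.hasDerivAt x)).div_const 2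
      convert h2 using 1
      ring
    have hz : (∫ x in (0:ℝ)..1, (A (k+1)).eval x * (derivative^[k+1] (Q (k+1))).eval x) = 0 := by
      rw [hA, hQd]
      rw [intervalIntegral.integral_eq_sub_of_hasDerivAt key (ii p (derivative p) 0 1)]
      rw [hpdef]
      rw [eval_iter_deriv_Q (by omega) (x := 0) (by norm_num),
          eval_iter_deriv_Q (by omega) (x := 1) (by norm_num)]
      norm_num
    rw [hz, mul_zero]
  · -- |i - j| ≥ 2 : value 0
    have hfar : i ≥ j + 2 ∨ j ≥ i + 2 := by omega
    rcases hfar with hf | hf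
    · -- i ≥ j + 2
      have hz : (∫ x in (0:ℝ)..1, (A j).eval x * (derivative^[i] (Q i)).eval x) = 0 := by
        rw [ibp_iter i i le_rfl (A j)]
        have hzero : derivative^[i] (A j) = 0 := by
          rcases Nat.eq_zero_or_pos j with h | h
          · subst h
            have hA0 : A 0 = X := by simp [A]
            rw [hA0]
            exact iterate_derivative_eq_zero (by rw [natDegree_X]; omega)
          · obtain ⟨k, rfl⟩ : ∃ k, j = k + 1 := ⟨j - 1, by omega⟩
            have hA : A (k+1) = derivative^[k] (Q (k+1)) := by simp [A]
            rw [hA, ← Function.iterate_add_apply]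
            exact iterate_derivative_eq_zero (by rw [natDegree_Q]; omega)
        rw [hzero]
        simp
      rw [hz, mul_zero]
    · -- j ≥ i + 2
      obtain ⟨k, rfl⟩ : ∃ k, j = k + 1 := ⟨j - 1, by omega⟩
      have hA : A (k+1) = derivative^[k] (Q (k+1)) := by simp [A]
      have hz : (∫ x in (0:ℝ)..1, (A (k+1)).eval x * (derivative^[i] (Q i)).eval x) = 0 := by
        rw [hA, comm01]
        rw [ibp_iter (k+1) k (by omega) (derivative^[i] (Q i))]
        have hzero : derivative^[k] (derivative^[i] (Q i)) = 0 := by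
          rw [← Function.iterate_add_apply]
          exact iterate_derivative_eq_zero (by rw [natDegree_Q]; omega)
        rw [hzero]
        simp
      rw [hz, mul_zero]
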